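/- Let $u, v \in S_n$ with $v$ a $k$-Grassmannian permutation (i.e., $v(1) < \cdots < v(k)$ and $v(k+1) < \cdots < v(n)$). Then $u \leq v$ in Bruhat order if and only if $u(j) \leq v(j)$ for all $1 \leq j \leq k$ and $u(m) \geq v(m)$ for all $k < m \leq n$. -/

import Mathlib

/-- Gale order on subsets of `Fin n`: compare the `h`-th smallest elements. -/
abbrev galeLE {n : ℕ} (I J : Finset (Fin n)) : Prop :=
  I.card = J.card ∧
    ∀ h < I.card, ((I.sort (· ≤ ·)).map Fin.val).getD h 0 ≤ ((J.sort (· ≤ ·)).map Fin.val).getD h 0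

/-- The initial set `y[k] = {y(1),...,y(k)}` of a permutation. -/
def initSet {n : ℕ} (y : Equiv.Perm (Fin n)) (k : ℕ) : Finset (Fin n) :=
  (Finset.univ.filter fun j : Fin n => j.val < k).image y

/-- Bruhat order via the tableau criterion. -/
def bruhatLE {n : ℕ} (u v : Equiv.Perm (Fin n)) : Prop :=
  ∀ k : ℕ, galeLE (initSet u k) (initSet v k)

/-- `v` is `k`-Grassmannian: increasing on the first `k` positions and on the rest. -/
def isGrassmannian {n : ℕ} (v : Equiv.Perm (Fin n)) (k : ℕ) : Prop :=
  (∀ i j : Fin n, i < j → j.val < k → v i < v j) ∧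
    (∀ i j : Fin n, i < j → k ≤ i.val → v i < v j)

/-- The points `a,b,c,d` occur (weakly) in this clockwise cyclic order. -/
abbrev cyclic4 (a b c d : ℕ) : Prop :=
  ((if b < a then 1 else 0) + (if c < b then 1 else 0) +
      (if d < c then 1 else 0) + (if a < d then 1 else 0) : ℕ) ≤ 1

/-- Arcs `i ↦ w i` and `j ↦ w j` form an alignment (in this order):
the points occur clockwise as `i, w i, w j, j`. -/
abbrev isAlignment {n : ℕ} (w : Equiv.Perm (Fin n)) (i j : Fin n) : Prop :=
  i ≠ j ∧ cyclic4 i.val (w i).val (w j).val j.val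

/-- Arcs `i ↦ w i` and `j ↦ w j` form a misalignment (in this order):
the points occur clockwise as `i, w i, j, w j`. -/
abbrev isMisalignment {n : ℕ} (w : Equiv.Perm (Fin n)) (i j : Fin n) : Prop :=
  i ≠ j ∧ cyclic4 i.val (w i).val j.val (w j).val

/-- `x` lies strictly inside the clockwise open arc from `a` to `b`. -/
abbrev cIoo (a b x : ℕ) : Prop :=
  (a < b ∧ a < x ∧ x < b) ∨ (b ≤ a ∧ (x < b ∨ a < x))

/-- Arcs `i ↦ w i` and `j ↦ w j` must cross: exactly one endpoint of the second
arc lies strictly inside the clockwise arc from `i` to `w i`. -/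
abbrev isCrossing {n : ℕ} (w : Equiv.Perm (Fin n)) (i j : Fin n) : Prop :=
  i ≠ j ∧ Xor' (cIoo i.val (w i).val j.val) (cIoo i.val (w i).val (w j).val)

/-- The shifted anti-exceedance set `I_r(w) = {i : i <_r w⁻¹ i}` (0-indexed start `r`). -/
abbrev antiExc {n : ℕ} (w : Equiv.Perm (Fin n)) (r : Fin n) : Finset (Fin n) :=
  Finset.univ.filter fun i => (i - r).val < (w.symm i - r).val

/-- The shifted Gale order `⪯_r`, obtained by rotating so that `r` is smallest. -/
abbrev shiftedGaleLE {n : ℕ} (r : Fin n) (I J : Finset (Fin n)) : Prop :=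
  galeLE (I.image fun x => x - r) (J.image fun x => x - r)

/-- The collection `{y[k] : y ∈ [u,v]}`. -/
def intervalBases {n : ℕ} (u v : Equiv.Perm (Fin n)) (k : ℕ) : Set (Finset (Fin n)) :=
  {I | ∃ y : Equiv.Perm (Fin n), bruhatLE u y ∧ bruhatLE y v ∧ initSet y k = I}

section Aux

lemma BS.cnt_eq {n : ℕ} (I : Finset (Fin n)) (t : ℕ) :
    (I.filter fun x => x.val ≤ t).card = ((I.sort (· ≤ ·)).filter fun x => x.val ≤ t).length := by
  have h1 : (↑(I.sort (· ≤ ·)) : Multiset (Fin n)) = I.val := Finset.sort_eq I _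
  show (Multiset.filter (fun x => x.val ≤ t) I.val).card = _
  rw [← h1, Multiset.filter_coe, Multiset.coe_card]

lemma BS.sorted_getD_le_iff {n : ℕ} (I : Finset (Fin n)) (h t : ℕ) (hh : h < I.card) :
    ((I.sort (· ≤ ·)).map Fin.val).getD h 0 ≤ t ↔
      h + 1 ≤ (I.filter fun x => x.val ≤ t).card := by
  set l := I.sort (· ≤ ·) with hl
  have hlen : l.length = I.card := Finset.length_sort _
  have hs : l.Pairwise (· < ·) := (Finset.sortedLT_sort I).pairwise
  have hmono : ∀ i j (hi : i < l.length) (hj : j < l.length), i ≤ j → l[i] ≤ l[j] := by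
    intro i j hi hj hij
    rcases lt_or_eq_of_le hij with h' | h'
    · exact le_of_lt ((List.pairwise_iff_getElem.mp hs) i j hi hj h')
    · subst h'; rfl
  have hh' : h < l.length := hlen ▸ hh
  rw [List.getD_eq_getElem _ _ (by simpa using hh'), List.getElem_map]
  rw [BS.cnt_eq]
  have hsplit : (l.filter fun x => x.val ≤ t).length =
      ((l.take (h+1)).filter fun x => x.val ≤ t).length +
      ((l.drop (h+1)).filter fun x => x.val ≤ t).length := by
    conv_lhs => rw [← List.take_append_drop (h+1) l]
    rw [List.filter_append, List.length_append]
  have hsplit' : (l.filter fun x => x.val ≤ t).length =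
      ((l.take h).filter fun x => x.val ≤ t).length +
      ((l.drop h).filter fun x => x.val ≤ t).length := by
    conv_lhs => rw [← List.take_append_drop h l]
    rw [List.filter_append, List.length_append]
  constructor
  · intro hle
    have htake : (l.take (h+1)).filter (fun x => x.val ≤ t) = l.take (h+1) := by
      rw [List.filter_eq_self]
      intro x hx
      rw [List.mem_take_iff_getElem] at hx
      obtain ⟨i, hi, rfl⟩ := hx
      have hi' : i < l.length := lt_of_lt_of_le hi (min_le_right _ _)
      simpa using le_trans (Fin.val_le_of_le (hmono i h hi' hh' (by omega))) hle
    rw [hsplit, htake, List.length_take]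
    omega
  · intro hcnt
    by_contra hgt
    push_neg at hgt
    have hdrop : (l.drop h).filter (fun x => x.val ≤ t) = [] := by
      rw [List.filter_eq_nil_iff]
      intro x hx
      rw [List.mem_drop_iff_getElem] at hx
      obtain ⟨i, hi, rfl⟩ := hx
      have hle2 : l[h] ≤ l[h+i] := hmono h (h+i) hh' (by omega) (by omega)
      simp only [decide_eq_true_eq]
      have := Fin.val_le_of_le hle2
      omega
    rw [hsplit', hdrop] at hcnt
    have := List.length_filter_le (fun x => decide (x.val ≤ t)) (l.take h)
    rw [List.length_take] at this
    simp at hcnt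
    omega

lemma BS.galeLE_iff_count {n : ℕ} (I J : Finset (Fin n)) (hcard : I.card = J.card) :
    galeLE I J ↔
      ∀ t, (J.filter fun x => x.val ≤ t).card ≤ (I.filter fun x => x.val ≤ t).card := by
  constructor
  · rintro ⟨-, hg⟩ t
    set c := (J.filter fun x => x.val ≤ t).card with hc
    rcases Nat.eq_zero_or_pos c with h0 | h0
    · omega
    have hcJ : c ≤ J.card := Finset.card_filter_le _ _
    have hh : c - 1 < I.card := by omega
    have h1 : ((J.sort (· ≤ ·)).map Fin.val).getD (c-1) 0 ≤ t := by
      rw [BS.sorted_getD_le_iff J (c-1) t (by omega)]; omega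
    have h2 := le_trans (hg (c-1) hh) h1
    rw [BS.sorted_getD_le_iff I (c-1) t hh] at h2
    omega
  · intro hcnt
    refine ⟨hcard, fun h hh => ?_⟩
    set t := ((J.sort (· ≤ ·)).map Fin.val).getD h 0 with ht
    have h1 : h + 1 ≤ (J.filter fun x => x.val ≤ t).card := by
      rw [← BS.sorted_getD_le_iff J h t (hcard ▸ hh)]
    rw [BS.sorted_getD_le_iff I h t hh]
    exact le_trans h1 (hcnt t)

open Finset in
lemma BS.cnt_initSet {n : ℕ} (y : Equiv.Perm (Fin n)) (m t : ℕ) :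
    ((initSet y m).filter fun x => x.val ≤ t).card
      = (univ.filter fun j : Fin n => j.val < m ∧ (y j).val ≤ t).card := by
  rw [initSet, Finset.filter_image, Finset.card_image_of_injective _ y.injective,
    Finset.filter_filter]

open Finset in
lemma BS.cnt_total {n : ℕ} (y : Equiv.Perm (Fin n)) (t : ℕ) :
    (univ.filter fun j : Fin n => (y j).val ≤ t).card
      = (univ.filter fun x : Fin n => x.val ≤ t).card := by
  apply Finset.card_nbij (i := fun j => y j)
  · intro a ha; simp_all
  · intro a ha b hb hab; exact y.injective hab
  · intro x hx; exact ⟨y.symm x, by simp_all⟩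

open Finset in
lemma BS.cnt_split {n m : ℕ} (q : Fin n → Prop) [DecidablePred q] :
    (univ.filter fun j : Fin n => j.val < m ∧ q j).card
      + (univ.filter fun j : Fin n => m ≤ j.val ∧ q j).card
      = (univ.filter q).card := by
  rw [← Finset.card_filter_add_card_filter_not (s := univ.filter q)
    (p := fun j => j.val < m), Finset.filter_filter, Finset.filter_filter]
  congr 1
  · congr 1; ext a; simp [and_comm]
  · congr 1; ext a; simp [and_comm, Nat.not_lt]

open Finset in
lemma BS.initSet_card {n : ℕ} (y : Equiv.Perm (Fin n)) (m : ℕ) :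
    (initSet y m).card = (univ.filter fun j : Fin n => j.val < m).card :=
  Finset.card_image_of_injective _ y.injective

open Finset in
lemma BS.bruhat_iff_cnt {n : ℕ} (u v : Equiv.Perm (Fin n)) :
    bruhatLE u v ↔ ∀ m t : ℕ,
      (univ.filter fun j : Fin n => j.val < m ∧ (v j).val ≤ t).card
        ≤ (univ.filter fun j : Fin n => j.val < m ∧ (u j).val ≤ t).card := by
  unfold bruhatLE
  apply forall_congr'
  intro m
  rw [BS.galeLE_iff_count _ _ (by rw [BS.initSet_card, BS.initSet_card])]
  simp only [BS.cnt_initSet]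

open Finset in
lemma BS.cnt_iff_tail {n : ℕ} (u v : Equiv.Perm (Fin n)) (m t : ℕ) :
    ((univ.filter fun j : Fin n => j.val < m ∧ (v j).val ≤ t).card
        ≤ (univ.filter fun j : Fin n => j.val < m ∧ (u j).val ≤ t).card)
      ↔ ((univ.filter fun j : Fin n => m ≤ j.val ∧ (u j).val ≤ t).card
        ≤ (univ.filter fun j : Fin n => m ≤ j.val ∧ (v j).val ≤ t).card) := by
  have h1 := BS.cnt_split (n := n) (m := m) (fun j => (u j).val ≤ t)
  have h2 := BS.cnt_split (n := n) (m := m) (fun j => (v j).val ≤ t)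
  have h3 : (univ.filter fun j : Fin n => (u j).val ≤ t).card
      = (univ.filter fun j : Fin n => (v j).val ≤ t).card := by
    rw [BS.cnt_total, BS.cnt_total]
  omega

open Finset in
lemma BS.card_init {n : ℕ} (m : ℕ) (h : m ≤ n) :
    (univ.filter fun i : Fin n => i.val < m).card = m := by
  rw [← Finset.card_range m]
  apply Finset.card_nbij (i := Fin.val)
  · intro a ha; simp_all
  · intro a _ b _ hab; exact Fin.val_injective hab
  · intro x hx
    simp only [coe_filter, mem_univ, Set.mem_image, Set.mem_setOf_eq, coe_range,
      Set.mem_Iio] at hx ⊢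
    exact ⟨⟨x, by omega⟩, by simpa using hx, rfl⟩

end Aux


/-- Bergeron–Sottile criterion: for `v` a `k`-Grassmannian permutation,
`u ≤ v` in Bruhat order iff `u(j) ≤ v(j)` for positions `j` in the first `k`
and `u(m) ≥ v(m)` for the remaining positions. -/
theorem bruhat_le_grassmannian_iff (n k : ℕ) (u v : Equiv.Perm (Fin n))
    (hv : isGrassmannian v k) :
    bruhatLE u v ↔
      ((∀ j : Fin n, j.val < k → u j ≤ v j) ∧ (∀ m : Fin n, k ≤ m.val → v m ≤ u m)) := by
  rw [BS.bruhat_iff_cnt]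
  constructor
  · intro H
    constructor
    · intro j hjk
      have hm : j.val + 1 ≤ n := j.isLt
      have hfull : (Finset.univ.filter fun i : Fin n => i.val < j.val + 1 ∧ (v i).val ≤ (v j).val)
          = Finset.univ.filter fun i : Fin n => i.val < j.val + 1 := by
        ext i
        simp only [Finset.mem_filter, Finset.mem_univ, true_and, and_iff_left_iff_imp]
        intro hi
        rcases lt_or_eq_of_le (Nat.lt_succ_iff.mp hi) with h' | h'
        · exact Fin.val_le_of_le (le_of_lt (hv.1 i j (by rwa [Fin.lt_def]) hjk))
        · rw [Fin.val_injective h']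
      have hc := H (j.val + 1) (v j).val
      rw [hfull, BS.card_init _ hm] at hc
      have hsub : (Finset.univ.filter fun i : Fin n => i.val < j.val + 1 ∧ (u i).val ≤ (v j).val)
          ⊆ Finset.univ.filter fun i : Fin n => i.val < j.val + 1 := by
        intro i hi
        simp only [Finset.mem_filter] at hi ⊢
        exact ⟨hi.1, hi.2.1⟩
      have heq := Finset.eq_of_subset_of_card_le hsub (by rw [BS.card_init _ hm]; exact hc)
      have hjmem : j ∈ Finset.univ.filter fun i : Fin n => i.val < j.val + 1 := by simp
      rw [← heq] at hjmem
      simp only [Finset.mem_filter] at hjmem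
      exact Fin.le_def.mpr hjmem.2.2
    · intro m hkm
      have hc := (BS.cnt_iff_tail u v m.val (u m).val).mp (H m.val (u m).val)
      have hpos : 0 < (Finset.univ.filter fun j : Fin n =>
          m.val ≤ j.val ∧ (u j).val ≤ (u m).val).card := by
        apply Finset.card_pos.mpr
        exact ⟨m, by simp⟩
      obtain ⟨j, hj⟩ := Finset.card_pos.mp (lt_of_lt_of_le hpos hc)
      simp only [Finset.mem_filter, Finset.mem_univ, true_and] at hj
      rcases eq_or_lt_of_le hj.1 with h' | h'
      · have : j = m := Fin.val_injective h'.symm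
        subst this
        exact Fin.le_def.mpr hj.2
      · have : v m < v j := hv.2 m j (Fin.lt_def.mpr h') hkm
        exact le_of_lt (lt_of_lt_of_le this (Fin.le_def.mpr hj.2))
  · rintro ⟨h1, h2⟩ m t
    rcases le_or_gt m k with hmk | hkm
    · apply Finset.card_le_card
      intro j hj
      simp only [Finset.mem_filter, Finset.mem_univ, true_and] at hj ⊢
      exact ⟨hj.1, le_trans (Fin.le_def.mp (h1 j (by omega))) hj.2⟩
    · rw [BS.cnt_iff_tail]
      apply Finset.card_le_card
      intro j hj
      simp only [Finset.mem_filter, Finset.mem_univ, true_and] at hj ⊢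
      exact ⟨hj.1, le_trans (Fin.le_def.mp (h2 j (by omega))) hj.2⟩
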